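/- With the shaped Bellman operator T of the previous setting, if η < (1 − γ)/(1 + γ) then T is a contraction on the space of functions S × A → ℝ with the sup-norm metric, with Lipschitz constant η(1+γ) + γ < 1. -/
import Mathlib


/-- If `η < (1 − γ)/(1 + γ)`, then the shaped Bellman operator is a contraction
on `S × A → ℝ` with the sup-norm metric, with Lipschitz constant `η(1+γ) + γ < 1`. -/
theorem shaped_bellman_contraction {S A : Type*} [Fintype S] [Nonempty S] [Fintype A] [Nonempty A]
    (r : S → A → ℝ) (γ η : ℝ) (hγ0 : 0 ≤ γ) (hγ1 : γ < 1) (hη : 0 ≤ η)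
    (hηsmall : η < (1 - γ) / (1 + γ))
    (P : S → A → S → ℝ) (hP0 : ∀ s a s', 0 ≤ P s a s') (hP1 : ∀ s a, ∑ s', P s a s' = 1)
    (T : (S → A → ℝ) → (S → A → ℝ))
    (hT : ∀ Q s a, T Q s a =
      r s a + γ * (∑ s', P s a s' * (η * ⨆ a' : A, Q s' a'))
        - η * (⨆ a' : A, Q s a')
        + γ * (∑ s', P s a s' * ⨆ a' : A, Q s' a')) :
    η * (1 + γ) + γ < 1 ∧
      ∀ Q1 Q2 : S → A → ℝ, dist (T Q1) (T Q2) ≤ (η * (1 + γ) + γ) * dist Q1 Q2 := by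
  have hγ1' : (0:ℝ) < 1 + γ := by linarith
  have hK : η * (1 + γ) + γ < 1 := by
    have := (lt_div_iff₀ hγ1').mp hηsmall
    linarith
  refine ⟨hK, fun Q1 Q2 => ?_⟩
  set D := dist Q1 Q2 with hD
  have hD0 : 0 ≤ D := dist_nonneg
  have hKnn : 0 ≤ η * (1 + γ) + γ := by positivity
  set M1 : S → ℝ := fun s => ⨆ a' : A, Q1 s a' with hM1
  set M2 : S → ℝ := fun s => ⨆ a' : A, Q2 s a' with hM2
  have hpt : ∀ s a, |Q1 s a - Q2 s a| ≤ D := by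
    intro s a
    have h1 : dist (Q1 s a) (Q2 s a) ≤ dist (Q1 s) (Q2 s) := dist_le_pi_dist (Q1 s) (Q2 s) a
    have h2 : dist (Q1 s) (Q2 s) ≤ D := dist_le_pi_dist Q1 Q2 s
    rw [Real.dist_eq] at h1
    linarith
  have sup_sub : ∀ (f g : A → ℝ), (∀ a, f a - g a ≤ D) → (⨆ a, f a) - (⨆ a, g a) ≤ D := by
    intro f g h
    rw [sub_le_iff_le_add]
    refine ciSup_le fun a => ?_
    have := le_ciSup (Set.Finite.bddAbove (Set.finite_range g)) a
    linarith [h a]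
  have hMA : ∀ s, |M1 s - M2 s| ≤ D := by
    intro s
    rw [abs_le]
    constructor
    · have := sup_sub (Q2 s) (Q1 s) (fun a => by have := hpt s a; rw [abs_le] at this; linarith)
      simp only [hM1, hM2]; linarith
    · exact sup_sub (Q1 s) (Q2 s) (fun a => by have := hpt s a; rw [abs_le] at this; linarith)
  rw [dist_pi_le_iff (by positivity)]
  intro s
  rw [dist_pi_le_iff (by positivity)]
  intro a
  rw [Real.dist_eq, hT, hT]
  set E := ∑ s', P s a s' * (M1 s' - M2 s') with hEdef
  have hEabs : |E| ≤ D := by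
    calc |E| ≤ ∑ s', |P s a s' * (M1 s' - M2 s')| := Finset.abs_sum_le_sum_abs _ _
      _ ≤ ∑ s', P s a s' * D := by
          refine Finset.sum_le_sum fun s' _ => ?_
          rw [abs_mul, abs_of_nonneg (hP0 s a s')]
          exact mul_le_mul_of_nonneg_left (hMA s') (hP0 s a s')
      _ = D := by rw [← Finset.sum_mul, hP1 s a, one_mul]
  have heq : (r s a + γ * (∑ s', P s a s' * (η * M1 s')) - η * M1 s
        + γ * ∑ s', P s a s' * M1 s')
      - (r s a + γ * (∑ s', P s a s' * (η * M2 s')) - η * M2 s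
        + γ * ∑ s', P s a s' * M2 s')
      = γ * η * E + γ * E - η * (M1 s - M2 s) := by
    have hE : E = (∑ s', P s a s' * M1 s') - ∑ s', P s a s' * M2 s' := by
      rw [hEdef, ← Finset.sum_sub_distrib]
      exact Finset.sum_congr rfl fun s' _ => by ring
    have hEη : (∑ s', P s a s' * (η * M1 s')) - ∑ s', P s a s' * (η * M2 s') = η * E := by
      rw [hE, mul_sub, Finset.mul_sum, Finset.mul_sum, ← Finset.sum_sub_distrib,
        ← Finset.sum_sub_distrib]
      exact Finset.sum_congr rfl fun s' _ => by ring
    linear_combination γ * hEη - γ * hE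
  rw [heq]
  have b := abs_le.mp hEabs
  have bm := abs_le.mp (hMA s)
  have c1 : γ * η * E ≤ γ * η * D := by
    have : (0:ℝ) ≤ γ * η := mul_nonneg hγ0 hη
    nlinarith
  have c1' : γ * η * (-D) ≤ γ * η * E := by
    have : (0:ℝ) ≤ γ * η := mul_nonneg hγ0 hη
    nlinarith
  have c2 : γ * E ≤ γ * D := mul_le_mul_of_nonneg_left b.2 hγ0
  have c2' : γ * (-D) ≤ γ * E := mul_le_mul_of_nonneg_left b.1 hγ0
  have c3 : η * (M1 s - M2 s) ≤ η * D := mul_le_mul_of_nonneg_left bm.2 hη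
  have c3' : η * (-D) ≤ η * (M1 s - M2 s) := mul_le_mul_of_nonneg_left bm.1 hη
  rw [abs_le]
  constructor <;> nlinarith
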